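/- For every integer n ≥ 1, the following identity holds in the ring of formal power series ℚ[[t]]: (1 − t)^{2n−1} · Σ_{k=0}^∞ binom(n+k−1, k)² t^k = Σ_{k=0}^{n−1} binom(n−1, k)² t^k. -/

import Mathlib

open Finset

private lemma choose_fact1 (a j : ℕ) :
    (2*a+j+1) * Nat.choose (2*a+j) (2*a) = (j+1) * Nat.choose (2*a+j+1) (2*a) := by
  have hs : Nat.choose (2*a+j) (2*a) = Nat.choose (2*a+j) j := by
    have := Nat.choose_symm (n := 2*a+j) (k := j) (by omega)
    simpa [show 2*a+j-j = 2*a by omega] using this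
  have hs' : Nat.choose (2*a+j+1) (2*a) = Nat.choose (2*a+j+1) (j+1) := by
    have := Nat.choose_symm (n := 2*a+j+1) (k := j+1) (by omega)
    simpa [show 2*a+j+1-(j+1) = 2*a by omega] using this
  rw [hs, hs']
  have := Nat.add_one_mul_choose_eq (2*a+j) j
  rw [this, Nat.mul_comm]

private lemma term_id (a i j : ℕ) :
    ((a:ℚ)+i+j+1)^2 * (Nat.choose a i:ℚ)^2 * (Nat.choose (2*a+j) (2*a):ℚ)
      + (i:ℚ)^2 * (Nat.choose a i:ℚ)^2 * (Nat.choose (2*a+j+1) (2*a):ℚ)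
    = ((i:ℚ)+j+1)^2 * (Nat.choose a i:ℚ)^2 * (Nat.choose (2*a+j+1) (2*a):ℚ)
      + ((i:ℚ)+1)^2 * (Nat.choose a (i+1):ℚ)^2 * (Nat.choose (2*a+j) (2*a):ℚ) := by
  have h1 := congrArg (Nat.cast (R := ℚ)) (choose_fact1 a j)
  push_cast at h1
  rcases le_or_gt i a with hia | hia
  · have h2 : ((i:ℚ)+1) * (Nat.choose a (i+1):ℚ) = ((a:ℚ)-i) * (Nat.choose a i:ℚ) := by
      have h := congrArg (Nat.cast (R := ℚ)) (Nat.choose_succ_right_eq a i)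
      push_cast [Nat.cast_sub hia] at h
      linarith
    linear_combination ((Nat.choose a i:ℚ)^2*(2*(i:ℚ)+(j:ℚ)+1)) * h1
      - (Nat.choose (2*a+j) (2*a):ℚ) * (((i:ℚ)+1)*(Nat.choose a (i+1):ℚ)
          + ((a:ℚ)-(i:ℚ))*(Nat.choose a i:ℚ)) * h2
  · rw [Nat.choose_eq_zero_of_lt hia, Nat.choose_eq_zero_of_lt (show a < i+1 by omega)]
    push_cast
    ring

private def tf (a k m : ℕ) : ℚ :=
  (m:ℚ)^2 * (Nat.choose a m:ℚ)^2 * (Nat.choose (2*a+(k+1-m)) (2*a):ℚ)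

private lemma rec_id (a k : ℕ) :
    ((a:ℚ)+k+1)^2 * (∑ i ∈ range (k+1),
        (Nat.choose a i:ℚ)^2 * (Nat.choose (2*a+(k-i)) (2*a):ℚ))
    = ((k:ℚ)+1)^2 * (∑ i ∈ range (k+2),
        (Nat.choose a i:ℚ)^2 * (Nat.choose (2*a+(k+1-i)) (2*a):ℚ)) := by
  rw [Finset.mul_sum, Finset.mul_sum]
  have key : ∀ i ∈ range (k+1),
      ((a:ℚ)+k+1)^2 * ((Nat.choose a i:ℚ)^2 * (Nat.choose (2*a+(k-i)) (2*a):ℚ))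
      = ((k:ℚ)+1)^2 * ((Nat.choose a i:ℚ)^2 * (Nat.choose (2*a+(k+1-i)) (2*a):ℚ))
        + (tf a k (i+1) - tf a k i) := by
    intro i hi
    rw [Finset.mem_range] at hi
    obtain ⟨j, rfl⟩ : ∃ j, k = i + j := ⟨k - i, by omega⟩
    simp only [tf]
    rw [show i+j-i = j by omega, show i+j+1-i = j+1 by omega,
      show i+j+1-(i+1) = j by omega, show 2*a+(j+1) = 2*a+j+1 by omega]
    push_cast
    linear_combination term_id a i j
  rw [Finset.sum_congr rfl key, Finset.sum_add_distrib,
    Finset.sum_range_sub (tf a k) (k+1)]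
  conv_rhs => rw [Finset.sum_range_succ]
  congr 1
  simp only [tf, Nat.sub_self, Nat.add_zero, Nat.choose_self, Nat.choose_zero_right]
  push_cast
  ring

private lemma sum_id (a : ℕ) : ∀ k : ℕ,
    (∑ i ∈ range (k+1), (Nat.choose a i:ℚ)^2 * (Nat.choose (2*a+(k-i)) (2*a):ℚ))
      = (Nat.choose (a+k) k:ℚ)^2 := by
  intro k
  induction k with
  | zero => simp
  | succ k ih =>
    rw [show a + (k+1) = a + k + 1 from rfl]
    have h := rec_id a k
    rw [ih] at h
    have hc : ((a:ℚ)+k+1) * (Nat.choose (a+k) k:ℚ)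
        = ((k:ℚ)+1) * (Nat.choose (a+k+1) (k+1):ℚ) := by
      have hh := congrArg (Nat.cast (R := ℚ)) (Nat.add_one_mul_choose_eq (a+k) k)
      push_cast [Nat.succ_eq_add_one] at hh
      linarith
    have hk2 : (((k:ℚ)+1)^2) ≠ 0 := by positivity
    apply mul_left_cancel₀ hk2
    rw [← h]
    linear_combination (((a:ℚ)+k+1) * (Nat.choose (a+k) k:ℚ)
      + ((k:ℚ)+1) * (Nat.choose (a+k+1) (k+1):ℚ)) * hc

private lemma coeff_poly (a m : ℕ) :
    PowerSeries.coeff m (∑ i ∈ range (a+1),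
        PowerSeries.C (R := ℚ) ((Nat.choose a i:ℚ)^2) * PowerSeries.X^i)
      = (Nat.choose a m:ℚ)^2 := by
  rw [map_sum]
  simp only [PowerSeries.coeff_C_mul, PowerSeries.coeff_X_pow, mul_ite, mul_one, mul_zero]
  rw [Finset.sum_ite_eq (range (a+1)) m (fun i => (Nat.choose a i:ℚ)^2)]
  split
  · rfl
  · next h =>
    rw [Nat.choose_eq_zero_of_lt (by simpa using h)]
    norm_num

/-- the completely degenerate case, via Euler's transformation: in
`ℚ[[t]]`, `(1-t)^{2n-1} · Σ_k binom(n+k-1,k)² t^k = Σ_{k=0}^{n-1} binom(n-1,k)² t^k`. -/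
theorem euler_transformation_central_binomial (n : ℕ) (hn : 1 ≤ n) :
    (1 - PowerSeries.X : PowerSeries ℚ) ^ (2 * n - 1) *
        PowerSeries.mk (fun k => ((n + k - 1).choose k : ℚ) ^ 2)
      = ∑ k ∈ Finset.range n,
          PowerSeries.C (R := ℚ) (((n - 1).choose k : ℚ) ^ 2) * PowerSeries.X ^ k := by
  obtain ⟨a, rfl⟩ : ∃ a, n = a + 1 := ⟨n - 1, by omega⟩
  rw [show 2*(a+1)-1 = 2*a+1 by omega, show a+1-1 = a from rfl]
  have hmk : PowerSeries.mk (fun k => (((a+1) + k - 1).choose k : ℚ) ^ 2)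
      = PowerSeries.mk (fun k => ((a + k).choose k : ℚ) ^ 2) := by
    exact congrArg PowerSeries.mk (funext fun k => by
      rw [show a + 1 + k - 1 = a + k by omega])
  rw [hmk]
  have hprod : PowerSeries.mk (fun k => ((a + k).choose k : ℚ) ^ 2)
      = (∑ i ∈ range (a+1), PowerSeries.C (R := ℚ) ((Nat.choose a i:ℚ)^2) * PowerSeries.X^i)
        * PowerSeries.mk (fun k => ((2*a + k).choose (2*a) : ℚ)) := by
    refine PowerSeries.ext fun m => ?_
    rw [PowerSeries.coeff_mul, Finset.Nat.sum_antidiagonal_eq_sum_range_succ_mk]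
    simp only [PowerSeries.coeff_mk, coeff_poly]
    exact (sum_id a m).symm
  have hinv : (PowerSeries.mk (fun k => ((2*a + k).choose (2*a) : ℚ)))
      * (1 - PowerSeries.X : PowerSeries ℚ) ^ (2*a+1) = 1 := by
    simpa using PowerSeries.mk_add_choose_mul_one_sub_pow_eq_one ℚ (2*a)
  rw [hprod]
  calc (1 - PowerSeries.X : PowerSeries ℚ) ^ (2*a+1) *
        ((∑ i ∈ range (a+1), PowerSeries.C (R := ℚ) ((Nat.choose a i:ℚ)^2) * PowerSeries.X^i)
          * PowerSeries.mk (fun k => ((2*a + k).choose (2*a) : ℚ)))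
      = (∑ i ∈ range (a+1), PowerSeries.C (R := ℚ) ((Nat.choose a i:ℚ)^2) * PowerSeries.X^i)
          * (PowerSeries.mk (fun k => ((2*a + k).choose (2*a) : ℚ))
            * (1 - PowerSeries.X : PowerSeries ℚ) ^ (2*a+1)) := by ring
    _ = _ := by rw [hinv, mul_one]
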